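/- In ℂ^d ⊗ ℂ^d (d ≥ 2), there is no product vector |α⟩⊗|β⟩ with ⟨αβ|ν₁⟩ ≠ 0 and ⟨αβ|ν_k⟩ = 0 for all k = 2, …, d+1, where |ν_k⟩ = Σ_{j=0}^{d-1} e^{2πi(k−1)j/d}|jj⟩ for k ≤ d and |ν_{d+1}⟩ = |01⟩. Consequently the state |ν₁⟩ cannot be conclusively identified by LOCC from this set. -/

import Mathlib

open Complex Finset in
lemma geom_aux (d : ℕ) (hd : 0 < d) (m : ℕ) :
    ∑ k ∈ Finset.range d, (Complex.exp (2 * Real.pi * Complex.I / d)) ^ (m * k)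
      = if d ∣ m then (d : ℂ) else 0 := by
  have hprim := Complex.isPrimitiveRoot_exp d hd.ne'
  by_cases h : d ∣ m
  · have h1 : (Complex.exp (2 * Real.pi * Complex.I / d)) ^ m = 1 :=
      (hprim.pow_eq_one_iff_dvd m).mpr h
    simp [pow_mul, h1, h]
  · have hne : (Complex.exp (2 * Real.pi * Complex.I / d)) ^ m ≠ 1 :=
      fun hc => h ((hprim.pow_eq_one_iff_dvd m).mp hc)
    have hpow : ((Complex.exp (2 * Real.pi * Complex.I / d)) ^ m) ^ d = 1 := by
      rw [← pow_mul, mul_comm m d, pow_mul, hprim.pow_eq_one, one_pow]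
    rw [if_neg h]
    calc ∑ k ∈ Finset.range d, (Complex.exp (2 * Real.pi * Complex.I / d)) ^ (m * k)
        = ∑ k ∈ Finset.range d, ((Complex.exp (2 * Real.pi * Complex.I / d)) ^ m) ^ k := by
          simp [pow_mul]
      _ = (((Complex.exp (2 * Real.pi * Complex.I / d)) ^ m) ^ d - 1) /
            ((Complex.exp (2 * Real.pi * Complex.I / d)) ^ m - 1) := geom_sum_eq hne d
      _ = 0 := by rw [hpow]; simp


open scoped ComplexInnerProductSpace

/-- The d+1 states in ℂ^d ⊗ ℂ^d (2 ≤ d): for k < d,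
ν_k = Σ_j e^{2πi k j / d} |jj⟩ (0-based k corresponds to k−1 in the 1-based
labelling ν_1,…,ν_d), and ν_d = |01⟩. -/
noncomputable def nu (d : ℕ) (hd : 2 ≤ d) (k : Fin (d + 1)) :
    EuclideanSpace ℂ (Fin d × Fin d) :=
  if (k : ℕ) < d then
    WithLp.toLp 2 (fun p : Fin d × Fin d => if p.1 = p.2 then
      Complex.exp (2 * Real.pi * Complex.I * (k : ℕ) * (p.2 : ℕ) / d) else 0)
  else
    WithLp.toLp 2 (fun p : Fin d × Fin d => if p = (⟨0, by omega⟩, ⟨1, by omega⟩) then 1 else 0)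

/-- Product vector α ⊗ β in ℂ^d ⊗ ℂ^d. -/
noncomputable def prodVec (d : ℕ) (α β : EuclideanSpace ℂ (Fin d)) :
    EuclideanSpace ℂ (Fin d × Fin d) :=
  WithLp.toLp 2 (fun p : Fin d × Fin d => α p.1 * β p.2)

/-- There is no product vector with nonzero overlap with ν₁ and vanishing
overlap with all the other ν_k: by Chefles' criterion, ν₁ cannot be
conclusively identified by LOCC from this set. -/
theorem stmt8 (d : ℕ) (hd : 2 ≤ d) :
    ¬ ∃ α β : EuclideanSpace ℂ (Fin d),
      ⟪prodVec d α β, nu d hd 0⟫ ≠ 0 ∧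
      ∀ k : Fin (d + 1), k ≠ 0 → ⟪prodVec d α β, nu d hd k⟫ = 0 := by
  rintro ⟨α, β, h1, h2⟩
  have hd0 : 0 < d := by omega
  set ω : ℂ := Complex.exp (2 * Real.pi * Complex.I / d) with hω
  set c : Fin d → ℂ := fun j => (starRingEnd ℂ) (α j * β j) with hc
  -- inner product with nu k for k < d
  have hF : ∀ k : ℕ, (hk : k < d) →
      ⟪prodVec d α β, nu d hd ⟨k, by omega⟩⟫ = ∑ j : Fin d, c j * ω ^ (k * (j : ℕ)) := by
    intro k hk
    have hcond : ((⟨k, by omega⟩ : Fin (d + 1)) : ℕ) < d := hk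
    rw [PiLp.inner_apply]
    simp only [nu, if_pos hcond, RCLike.inner_apply', prodVec]
    rw [Fintype.sum_prod_type]
    have : ∀ i j : Fin d,
        (starRingEnd ℂ) (α i * β j) * (if i = j then
          Complex.exp (2 * Real.pi * Complex.I * k * (j : ℕ) / d) else 0)
        = if i = j then c j * ω ^ (k * (j : ℕ)) else 0 := by
      intro i j
      by_cases hij : i = j
      · subst hij
        rw [if_pos rfl, if_pos rfl, hc]
        congr 1
        rw [hω, ← Complex.exp_nat_mul]
        congr 1
        push_cast
        ring
      · simp [hij]
    simp only [this]
    simp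
  -- c j ≠ 0 for all j
  have hcne : ∀ j : Fin d, c j ≠ 0 := by
    intro j
    have hS : ∑ k ∈ Finset.range d,
        ((∑ i : Fin d, c i * ω ^ (k * (i : ℕ))) * ω ^ (k * (d - (j : ℕ)))) = c j * d := by
      have step1 : ∀ k ∈ Finset.range d,
          (∑ i : Fin d, c i * ω ^ (k * (i : ℕ))) * ω ^ (k * (d - (j : ℕ)))
          = ∑ i : Fin d, c i * ω ^ (((i : ℕ) + (d - (j : ℕ))) * k) := by
        intro k hk
        rw [Finset.sum_mul]
        refine Finset.sum_congr rfl fun i _ => ?_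
        rw [mul_assoc, ← pow_add]
        ring_nf
      rw [Finset.sum_congr rfl step1, Finset.sum_comm]
      have step2 : ∀ i : Fin d,
          ∑ k ∈ Finset.range d, c i * ω ^ (((i : ℕ) + (d - (j : ℕ))) * k)
          = c i * (if i = j then (d : ℂ) else 0) := by
        intro i
        rw [← Finset.mul_sum, geom_aux d hd0]
        congr 1
        have key : d ∣ (i : ℕ) + (d - (j : ℕ)) ↔ i = j := by
          constructor
          · rintro ⟨q, hq⟩
            have hi := i.isLt
            have hj := j.isLt
            have hq1 : d * q < d * 2 := by omega
            have hq2 : q < 2 := Nat.lt_of_mul_lt_mul_left hq1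
            have hq0 : q ≠ 0 := by rintro rfl; omega
            have : q = 1 := by omega
            subst this
            exact Fin.ext (by omega)
          · intro h
            subst h
            exact ⟨1, by omega⟩
        simp [key]
      rw [Finset.sum_congr rfl (fun i _ => step2 i)]
      simp [mul_ite, Finset.sum_ite_eq']
    have hzero : ∀ k ∈ Finset.range d, k ≠ 0 →
        (∑ i : Fin d, c i * ω ^ (k * (i : ℕ))) * ω ^ (k * (d - (j : ℕ))) = 0 := by
      intro k hk hk0
      have hkd : k < d := Finset.mem_range.mp hk
      have hne : (⟨k, by omega⟩ : Fin (d + 1)) ≠ 0 := by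
        intro hcon
        apply hk0
        simpa [Fin.ext_iff] using hcon
      rw [← hF k hkd, h2 _ hne, zero_mul]
    have hS0 : ∑ k ∈ Finset.range d,
        ((∑ i : Fin d, c i * ω ^ (k * (i : ℕ))) * ω ^ (k * (d - (j : ℕ))))
        = ⟪prodVec d α β, nu d hd 0⟫ := by
      rw [Finset.sum_eq_single 0 hzero (by intro h; exact absurd (Finset.mem_range.mpr hd0) h)]
      have h00 : (0 : Fin (d + 1)) = ⟨0, by omega⟩ := rfl
      rw [h00, hF 0 hd0]
      simp
    have hne0 : c j * d ≠ 0 := by rw [← hS, hS0]; exact h1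
    intro hc0
    exact hne0 (by rw [hc0, zero_mul])
  -- conclude
  have hα0 : α ⟨0, by omega⟩ ≠ 0 := by
    have := hcne ⟨0, by omega⟩
    simp only [hc, map_mul, ne_eq, mul_eq_zero, not_or, map_eq_zero] at this
    exact this.1
  have hβ1 : β ⟨1, by omega⟩ ≠ 0 := by
    have := hcne ⟨1, by omega⟩
    simp only [hc, map_mul, ne_eq, mul_eq_zero, not_or, map_eq_zero] at this
    exact this.2
  -- the last state
  have hlast : ⟪prodVec d α β, nu d hd ⟨d, by omega⟩⟫
      = (starRingEnd ℂ) (α ⟨0, by omega⟩ * β ⟨1, by omega⟩) := by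
    have hcond : ¬ ((⟨d, by omega⟩ : Fin (d + 1)) : ℕ) < d := by simp
    rw [PiLp.inner_apply]
    simp only [nu, if_neg hcond, RCLike.inner_apply, prodVec]
    rw [Finset.sum_eq_single ((⟨0, by omega⟩ : Fin d), (⟨1, by omega⟩ : Fin d))]
    · simp
    · intro b _ hb; simp [hb]
    · intro h; exact absurd (Finset.mem_univ _) h
  have hdne : (⟨d, by omega⟩ : Fin (d + 1)) ≠ 0 := by
    intro hcon
    have : d = 0 := by simpa [Fin.ext_iff] using hcon
    omega
  have := h2 _ hdne
  rw [hlast] at this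
  simp only [map_eq_zero, mul_eq_zero] at this
  rcases this with h | h
  · exact hα0 h
  · exact hβ1 h
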